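/- arXiv:2204.14174 — 3 statements merged into one kernel-verified Lean document; each statement's English description precedes it below -/
import Mathlib

section
/- If T: ℝⁿ → ℝⁿ is an averaged operator, i.e., T = (1-α)·Id + α·Q for some α ∈ (0,1) and a 1-Lipschitz map Q, and T has at least one fixed point, then for any starting point x¹ the sequence defined by x^{k+1} = T(x^k) converges to a fixed point of T. -/
open Filter

lemma norm_combo_sq {E : Type*} [NormedAddCommGroup E] [InnerProductSpace ℝ E]
    (a b : E) (c : ℝ) :
    ‖(1-c)•a + c•b‖^2 = (1-c)*‖a‖^2 + c*‖b‖^2 - c*(1-c)*‖a-b‖^2 := by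
  have h1 := norm_add_sq_real ((1-c)•a) (c•b)
  have h2 := norm_sub_sq_real a b
  simp only [norm_smul, real_inner_smul_left, real_inner_smul_right, Real.norm_eq_abs] at h1
  rw [mul_pow, mul_pow, sq_abs, sq_abs] at h1
  rw [h1, h2]; ring

lemma key_ineq {E : Type*} [NormedAddCommGroup E] [InnerProductSpace ℝ E]
    (T Q : E → E) (α : ℝ) (hα : α ∈ Set.Ioo (0:ℝ) 1)
    (hQ : LipschitzWith 1 Q) (hT : ∀ x, T x = (1 - α) • x + α • Q x)
    (z : E) (hz : Q z = z) (x : E) :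
    ‖T x - z‖^2 + ((1-α)/α) * ‖x - T x‖^2 ≤ ‖x - z‖^2 := by
  obtain ⟨hα0, hα1⟩ := hα
  have hdecomp : T x - z = (1-α) • (x - z) + α • (Q x - z) := by
    rw [hT]
    have : z = (1-α) • z + α • z := by module
    nth_rewrite 1 [this]
    module
  have hxT : x - T x = α • (x - Q x) := by rw [hT]; module
  have hsub : (x - z) - (Q x - z) = x - Q x := by abel
  have hnorm : ‖Q x - z‖ ≤ ‖x - z‖ := by
    have := hQ.dist_le_mul x z
    simpa [hz, dist_eq_norm] using this
  have hnsq : ‖Q x - z‖^2 ≤ ‖x - z‖^2 := pow_le_pow_left₀ (norm_nonneg _) hnorm 2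
  have h1 : ‖T x - z‖^2 = (1-α)*‖x - z‖^2 + α*‖Q x - z‖^2 - α*(1-α)*‖x - Q x‖^2 := by
    rw [hdecomp, norm_combo_sq, hsub]
  have h2 : ‖x - T x‖^2 = α^2 * ‖x - Q x‖^2 := by
    rw [hxT, norm_smul, Real.norm_eq_abs, mul_pow, sq_abs]
  rw [h1, h2]
  have he : (1-α)/α * (α^2 * ‖x - Q x‖^2) = α*(1-α)*‖x - Q x‖^2 := by
    field_simp
  rw [he]
  nlinarith

/-- Krasnosel'skii–Mann: if `T = (1-α)•Id + α•Q` is averaged (with `α ∈ (0,1)` and `Q`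
nonexpansive) and `T` has a fixed point, then for any start `x¹` the Picard iterates
`x^{k+1} = T(x^k)` converge to a fixed point of `T`. -/
theorem averaged_operator_iterates_tendsto_fixedPoint
    (n : ℕ) (T Q : EuclideanSpace ℝ (Fin n) → EuclideanSpace ℝ (Fin n))
    (α : ℝ) (hα : α ∈ Set.Ioo (0 : ℝ) 1)
    (hQ : LipschitzWith 1 Q)
    (hT : ∀ x, T x = (1 - α) • x + α • Q x)
    (hfix : ∃ z, T z = z)
    (x1 : EuclideanSpace ℝ (Fin n)) :
    ∃ xstar, T xstar = xstar ∧
      Filter.Tendsto (fun k => T^[k] x1) Filter.atTop (nhds xstar) := by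
  obtain ⟨hα0, hα1⟩ := hα
  have hαmem : α ∈ Set.Ioo (0:ℝ) 1 := ⟨hα0, hα1⟩
  -- a fixed point of T is a fixed point of Q
  have hQfix : ∀ z, T z = z → Q z = z := by
    intro z hz
    have h : (1-α) • z + α • Q z = (1-α) • z + α • z := by
      rw [← hT z, hz]; module
    exact smul_right_injective (EuclideanSpace ℝ (Fin n)) (ne_of_gt hα0) (add_left_cancel h)
  obtain ⟨z, hz⟩ := hfix
  have hQz := hQfix z hz
  set x : ℕ → EuclideanSpace ℝ (Fin n) := fun k => T^[k] x1 with hx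
  have hstep : ∀ k, x (k+1) = T (x k) := fun k => Function.iterate_succ_apply' T k x1
  -- monotone decrease of distances to any fixed point
  have hmono : ∀ w, Q w = w → ∀ k, ‖x (k+1) - w‖^2 + ((1-α)/α) * ‖x k - T (x k)‖^2 ≤ ‖x k - w‖^2 := by
    intro w hw k
    rw [hstep]
    exact key_ineq T Q α hαmem hQ hT w hw (x k)
  -- d k := ‖x k - z‖² is antitone
  set d : ℕ → ℝ := fun k => ‖x k - z‖^2 with hd
  have hc : 0 < (1-α)/α := div_pos (by linarith) hα0
  have hdanti : Antitone d := by
    apply antitone_nat_of_succ_le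
    intro k
    have h := hmono z hQz k
    have hp : 0 ≤ (1-α)/α * ‖x k - T (x k)‖^2 := mul_nonneg hc.le (sq_nonneg _)
    show ‖x (k+1) - z‖^2 ≤ ‖x k - z‖^2
    linarith
  have hdbdd : BddBelow (Set.range d) := ⟨0, by rintro _ ⟨k, rfl⟩; positivity⟩
  have hdconv : Tendsto d atTop (nhds (⨅ i, d i)) := tendsto_atTop_ciInf hdanti hdbdd
  -- residuals tend to 0
  have hres : Tendsto (fun k => ‖x k - T (x k)‖^2) atTop (nhds 0) := by
    have hsub : Tendsto (fun k => d k - d (k+1)) atTop (nhds 0) := by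
      have h2 : Tendsto (fun k => d (k+1)) atTop (nhds (⨅ i, d i)) :=
        hdconv.comp (tendsto_add_atTop_nat 1)
      simpa using hdconv.sub h2
    have hsq : Tendsto (fun k => ((1-α)/α) * ‖x k - T (x k)‖^2) atTop (nhds 0) := by
      apply squeeze_zero (fun k => by positivity)
        (fun k => by have := hmono z hQz k; simp only [d]; linarith) hsub
    have h1 : α ≠ 0 := hα0.ne'
    have h2 : (1-α) ≠ 0 := by intro h; linarith [sub_eq_zero.mp h]
    have heq : ∀ s : ℝ, α/(1-α) * ((1-α)/α * s) = s := by
      intro s; field_simp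
    have := hsq.const_mul (α/(1-α))
    simp only [mul_zero] at this
    simpa only [heq] using this
  have hresnorm : Tendsto (fun k => ‖x k - T (x k)‖) atTop (nhds 0) := by
    have := hres.sqrt
    simpa [Real.sqrt_sq (norm_nonneg _)] using this
  have hresvec : Tendsto (fun k => x k - T (x k)) atTop (nhds 0) := by
    rw [tendsto_zero_iff_norm_tendsto_zero]
    exact hresnorm
  -- boundedness and convergent subsequence
  have hbdd : ∀ k, x k ∈ Metric.closedBall z ‖x1 - z‖ := by
    intro k
    have : d k ≤ d 0 := hdanti (Nat.zero_le k)
    simp only [d, hx, Function.iterate_zero, id_eq] at this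
    have h0 : ‖x k - z‖ ≤ ‖x1 - z‖ := by
      nlinarith [norm_nonneg (x k - z), norm_nonneg (x1 - z)]
    simpa [Metric.mem_closedBall, dist_eq_norm] using h0
  obtain ⟨xstar, -, φ, hφ, hφconv⟩ :=
    tendsto_subseq_of_bounded Metric.isBounded_closedBall hbdd
  -- T is continuous
  have hTcont : Continuous T := by
    have : Continuous fun y => (1-α) • y + α • Q y :=
      by have hQc := hQ.continuous; fun_prop
    simpa [← funext hT] using this
  -- xstar is a fixed point
  have hfixstar : T xstar = xstar := by
    have h1 : Tendsto (fun j => T (x (φ j))) atTop (nhds (T xstar)) :=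
      (hTcont.tendsto xstar).comp hφconv
    have h2 : Tendsto (fun j => x (φ j) - T (x (φ j))) atTop (nhds 0) :=
      hresvec.comp (hφ.tendsto_atTop)
    have h3 : Tendsto (fun j => x (φ j) - (x (φ j) - T (x (φ j)))) atTop (nhds (xstar - 0)) :=
      hφconv.sub h2
    simp only [sub_sub_cancel, sub_zero] at h3
    exact tendsto_nhds_unique h1 h3
  refine ⟨xstar, hfixstar, ?_⟩
  -- e k := ‖x k - xstar‖ is antitone with subsequence → 0
  have hQstar := hQfix xstar hfixstar
  set e : ℕ → ℝ := fun k => ‖x k - xstar‖ with he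
  have heanti : Antitone e := by
    apply antitone_nat_of_succ_le
    intro k
    have h := hmono xstar hQstar k
    have hsq : ‖x (k+1) - xstar‖^2 ≤ ‖x k - xstar‖^2 := by
      nlinarith [sq_nonneg ‖x k - T (x k)‖]
    have := Real.sqrt_le_sqrt hsq
    simpa [Real.sqrt_sq (norm_nonneg _)] using this
  have hebdd : BddBelow (Set.range e) := ⟨0, by rintro _ ⟨k, rfl⟩; positivity⟩
  have heconv : Tendsto e atTop (nhds (⨅ i, e i)) := tendsto_atTop_ciInf heanti hebdd
  have hesub0 : Tendsto (fun j => e (φ j)) atTop (nhds 0) := by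
    have : Tendsto (fun j => x (φ j) - xstar) atTop (nhds 0) := by
      simpa using hφconv.sub_const xstar
    simpa using this.norm
  have hesubI : Tendsto (fun j => e (φ j)) atTop (nhds (⨅ i, e i)) :=
    heconv.comp (hφ.tendsto_atTop)
  have hI0 : (⨅ i, e i) = 0 := tendsto_nhds_unique hesubI hesub0
  rw [hI0] at heconv
  rw [tendsto_iff_norm_sub_tendsto_zero]
  exact heconv
end

section
/- Let d > 0 and let (v*, z*) ∈ ℝ² with z* > ln(v* + d) (i.e., the point lies strictly outside the set P = {(v, z) : z ≤ ln(v + d)}). If (v̄, z̄) is the projection of (v*, z*) onto P, then z̄ = ln(v̄ + d) and the optimality condition z̄ - z* = -(v̄ + d)(v̄ - v*) holds. -/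
/-- Characterization of the Euclidean projection onto `P = {(v, z) : z ≤ ln(v + d)}`
for a point strictly outside the set: the projection `(v̄, z̄)` lies on the curve
`z̄ = ln(v̄ + d)` and satisfies the normal-line optimality condition
`z̄ - z* = -(v̄ + d)(v̄ - v*)`. -/
theorem log_hypograph_projection_optimality
    (d vs zs vb zb : ℝ) (hd : 0 < d)
    (hout : Real.log (vs + d) < zs)
    (hmem : 0 < vb + d ∧ zb ≤ Real.log (vb + d))
    (hproj : ∀ v z : ℝ, 0 < v + d → z ≤ Real.log (v + d) →
        (vb - vs) ^ 2 + (zb - zs) ^ 2 ≤ (v - vs) ^ 2 + (z - zs) ^ 2) :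
    zb = Real.log (vb + d) ∧ zb - zs = -((vb + d) * (vb - vs)) := by
  obtain ⟨hvb, hzb⟩ := hmem
  have h1 : zb = Real.log (vb + d) := by
    by_contra h
    have hlt : zb < Real.log (vb + d) := lt_of_le_of_ne hzb h
    by_cases hcase : zb < zs
    · set z' := min zs (Real.log (vb + d)) with hz'def
      have hz'le : z' ≤ Real.log (vb + d) := min_le_right _ _
      have hzb' : zb < z' := lt_min hcase hlt
      have hz'zs : z' ≤ zs := min_le_left _ _
      have := hproj vb z' hvb hz'le
      nlinarith
    · push_neg at hcase
      have h2 := hproj vb zs hvb (le_trans hcase hzb)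
      have hzbzs : zb = zs := by nlinarith
      set v' := Real.exp zs - d with hv'def
      have hv'd : v' + d = Real.exp zs := by ring
      have hv'pos : 0 < v' + d := by rw [hv'd]; exact Real.exp_pos zs
      have hfv' : Real.log (v' + d) = zs := by rw [hv'd, Real.log_exp]
      have h3 := hproj v' zs hv'pos (le_of_eq hfv'.symm)
      have hv'vb : v' < vb := by
        have : Real.exp zs < vb + d := by
          rw [← Real.exp_log hvb]
          exact Real.exp_lt_exp.mpr (hzbzs ▸ hlt)
        linarith
      have hvsv' : vs < v' := by
        by_cases hvs : 0 < vs + d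
        · have : vs + d < Real.exp zs := by
            rw [← Real.exp_log hvs]
            exact Real.exp_lt_exp.mpr hout
          linarith
        · push_neg at hvs
          have := Real.exp_pos zs
          linarith
      nlinarith
  refine ⟨h1, ?_⟩
  set g : ℝ → ℝ := fun v => (v - vs) ^ 2 + (Real.log (v + d) - zs) ^ 2 with hgdef
  have hne : vb + d ≠ 0 := ne_of_gt hvb
  have hlog : HasDerivAt (fun v : ℝ => Real.log (v + d)) ((vb + d)⁻¹ * 1) vb := by
    have := (Real.hasDerivAt_log hne).comp vb ((hasDerivAt_id vb).add_const d); exact this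
  have hderiv : HasDerivAt g
      (2 * (vb - vs) ^ 1 * 1 + 2 * (Real.log (vb + d) - zs) ^ 1 * ((vb + d)⁻¹ * 1)) vb := by
    exact (((hasDerivAt_id vb).sub_const vs).pow 2).add ((hlog.sub_const zs).pow 2)
  have hmin : IsLocalMin g vb := by
    have hmem' : Set.Ioi (-d) ∈ nhds vb := Ioi_mem_nhds (by linarith : -d < vb)
    refine Filter.eventually_of_mem hmem' ?_
    intro x hx
    have hx' : 0 < x + d := by
      have : -d < x := hx
      linarith
    have := hproj x (Real.log (x + d)) hx' le_rfl
    simp only [hgdef]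
    rw [← h1]
    linarith
  have hzero := hmin.hasDerivAt_eq_zero hderiv
  rw [← h1] at hzero
  have h4 : (vb + d) * (2 * (vb - vs) ^ 1 * 1 + 2 * (zb - zs) ^ 1 * ((vb + d)⁻¹ * 1)) = 0 := by
    rw [hzero]; ring
  field_simp at h4
  nlinarith [h4]
end

section
/- Let f: ℝⁿ → ℝ be convex and L-Lipschitz differentiable, and let g, h: ℝⁿ → ℝ ∪ {∞} be proper closed convex functions. If ξ* minimizes f + g + h and the Davis–Yin operator is defined with step size α ∈ (0, 2/L) by ξ = prox_{αf}(ζ), ψ = prox_{αg}(2ξ - ζ - α∇h(ξ)), T(ζ) = ζ + ψ - ξ, then any fixed point ζ* of T satisfies: ξ* := prox_{αf}(ζ*) is a minimizer of f + g + h. -/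
open Set Filter Topology

/-- `p` is the proximal point `prox_φ(x)` of an extended-real-valued function `φ` at `x`,
i.e. `p` minimizes `z ↦ φ(z) + (1/2)‖z - x‖²`. -/
def IsProximalPt {n : ℕ} (φ : EuclideanSpace ℝ (Fin n) → EReal)
    (x p : EuclideanSpace ℝ (Fin n)) : Prop :=
  ∀ z, φ p + (((1 : ℝ) / 2 * ‖p - x‖ ^ 2 : ℝ) : EReal) ≤
    φ z + (((1 : ℝ) / 2 * ‖z - x‖ ^ 2 : ℝ) : EReal)

/-- Convexity for an extended-real-valued function on ℝⁿ. -/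
def ERealConvex {n : ℕ} (φ : EuclideanSpace ℝ (Fin n) → EReal) : Prop :=
  ∀ x y : EuclideanSpace ℝ (Fin n), ∀ t : ℝ, t ∈ Icc (0 : ℝ) 1 →
    φ (t • x + (1 - t) • y) ≤ ((t : ℝ) : EReal) * φ x + (((1 - t : ℝ)) : EReal) * φ y

open scoped RealInnerProductSpace

/-- Subgradient inequality from the proximal characterization. -/
theorem prox_subgrad {n : ℕ} (f : EuclideanSpace ℝ (Fin n) → EReal)
    (hconv : ERealConvex f) (hne : ∀ x, f x ≠ ⊥)
    (α : ℝ) (hα : 0 < α) (x p : EuclideanSpace ℝ (Fin n))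
    (hp : IsProximalPt (fun z => ((α : ℝ) : EReal) * f z) x p)
    (z : EuclideanSpace ℝ (Fin n)) (a b : ℝ) (ha : f p = (a : EReal)) (hb : f z = (b : EReal)) :
    α * a + ⟪x - p, z - p⟫ ≤ α * b := by
  have key : ∀ t : ℝ, t ∈ Ioc (0:ℝ) 1 →
      α * a ≤ α * b + ⟪p - x, z - p⟫ + t / 2 * ‖z - p‖ ^ 2 := by
    intro t ht
    set zt := p + t • (z - p) with hzt
    have hconvz : f zt ≤ ((t * b + (1 - t) * a : ℝ) : EReal) := by
      have h1 : zt = t • z + (1 - t) • p := by rw [hzt]; module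
      have h2 := hconv z p t ⟨le_of_lt ht.1, ht.2⟩
      rw [← h1, hb, ha] at h2
      calc f zt ≤ _ := h2
        _ = _ := by norm_cast
    have hne_top : f zt ≠ ⊤ := by
      intro htop; rw [htop] at hconvz; exact (EReal.coe_lt_top _).not_ge hconvz
    obtain ⟨c, hc⟩ : ∃ c : ℝ, f zt = (c : EReal) :=
      ⟨(f zt).toReal, (EReal.coe_toReal hne_top (hne zt)).symm⟩
    have hcb : c ≤ t * b + (1 - t) * a := by
      rw [hc] at hconvz; exact_mod_cast hconvz
    have hineq := hp zt
    simp only [ha, hc] at hineq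
    have hreal : α * a + 1/2 * ‖p - x‖^2 ≤ α * c + 1/2 * ‖zt - x‖^2 := by
      have h3 : ((α * a + 1/2 * ‖p - x‖^2 : ℝ) : EReal) ≤
          ((α * c + 1/2 * ‖zt - x‖^2 : ℝ) : EReal) := by
        push_cast
        exact_mod_cast hineq
      exact_mod_cast h3
    have hnorm : ‖zt - x‖^2 = ‖p - x‖^2 + 2*(t*⟪p - x, z - p⟫) + t^2*‖z - p‖^2 := by
      have h2 : zt - x = (p - x) + t • (z - p) := by rw [hzt]; abel
      rw [h2, norm_add_sq_real, real_inner_smul_right, norm_smul,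
        Real.norm_eq_abs, abs_of_pos ht.1]
      ring
    have ht0 := ht.1
    nlinarith [hcb, hreal, hnorm, mul_pos hα ht0]
  have main : α * a ≤ α * b + ⟪p - x, z - p⟫ := by
    refine le_of_forall_pos_le_add ?_
    intro ε hε
    set t := min 1 (ε / (‖z - p‖^2 + 1)) with htdef
    have hden : (0:ℝ) < ‖z - p‖^2 + 1 := by positivity
    have h1 : 0 < t := lt_min one_pos (div_pos hε hden)
    have h2 : t ≤ 1 := min_le_left _ _
    have hk := key t ⟨h1, h2⟩
    have ht2 : t ≤ ε / (‖z - p‖^2 + 1) := min_le_right _ _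
    have ht3 : t * (‖z - p‖^2 + 1) ≤ ε := by
      rw [← le_div_iff₀ hden]; exact ht2
    have h3 : t / 2 * ‖z - p‖^2 ≤ ε := by nlinarith [sq_nonneg ‖z - p‖, h1.le]
    linarith
  have hinner : ⟪x - p, z - p⟫ = -⟪p - x, z - p⟫ := by
    rw [← inner_neg_left]; congr 1; abel
  rw [hinner]; linarith

/-- Gradient inequality for a convex differentiable function. -/
theorem grad_convex_ineq {n : ℕ} (h : EuclideanSpace ℝ (Fin n) → ℝ)
    (hconv : ConvexOn ℝ univ h) (x v g : EuclideanSpace ℝ (Fin n))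
    (hg : HasGradientAt h g x) :
    ⟪g, v⟫ ≤ h (x + v) - h x := by
  have hf : HasFDerivAt h ((InnerProductSpace.toDual ℝ _) g) x := hg.hasFDerivAt
  have hline : HasDerivAt (fun t : ℝ => h (x + t • v)) ⟪g, v⟫ 0 := by
    have h1 : HasDerivAt (fun t : ℝ => x + t • v) v 0 := by
      simpa using ((hasDerivAt_id (0:ℝ)).smul_const v).const_add x
    have hf' : HasFDerivAt h ((InnerProductSpace.toDual ℝ _) g) (x + (0:ℝ) • v) := by
      simpa using hf
    have := hf'.comp_hasDerivAt 0 h1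
    simpa [InnerProductSpace.toDual_apply_apply, Function.comp_def] using this
  have hslope := hasDerivAt_iff_tendsto_slope.1 hline
  have hsub : (𝓝[>] (0:ℝ)) ≤ 𝓝[≠] (0:ℝ) :=
    nhdsWithin_mono _ (fun y hy => ne_of_gt hy)
  refine le_of_tendsto (hslope.mono_left hsub) ?_
  filter_upwards [Ioo_mem_nhdsGT_of_mem (Set.mem_Ico.2 ⟨le_refl (0:ℝ), one_pos⟩)] with t ht
  have ht0 : (0:ℝ) < t := ht.1
  have ht1 : t < 1 := ht.2
  have hc := hconv.2 (mem_univ (x + v)) (mem_univ x) ht0.le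
    (by linarith : (0:ℝ) ≤ 1 - t) (by ring)
  have heq : t • (x + v) + (1 - t) • x = x + t • v := by module
  rw [heq] at hc
  simp only [smul_eq_mul] at hc
  rw [slope_def_field]
  rw [div_le_iff₀ (by simpa using ht0)]
  simp only [zero_smul, add_zero, sub_zero] at *
  nlinarith [hc]

/-- Finiteness of the value at a proximal point. -/
theorem prox_finite {n : ℕ} (f : EuclideanSpace ℝ (Fin n) → EReal)
    (hne : ∀ x, f x ≠ ⊥) (hproper : ∃ x, f x ≠ ⊤)
    (α : ℝ) (hα : 0 < α) (x p : EuclideanSpace ℝ (Fin n))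
    (hp : IsProximalPt (fun z => ((α : ℝ) : EReal) * f z) x p) :
    ∃ c : ℝ, f p = (c : EReal) := by
  obtain ⟨z0, hz0⟩ := hproper
  obtain ⟨d, hd⟩ : ∃ d : ℝ, f z0 = (d : EReal) :=
    ⟨(f z0).toReal, (EReal.coe_toReal hz0 (hne z0)).symm⟩
  have hineq := hp z0
  simp only [hd] at hineq
  have hRHS : ((α : ℝ) : EReal) * (d : EReal) + (((1:ℝ)/2 * ‖z0 - x‖^2 : ℝ) : EReal)
      = ((α * d + 1/2 * ‖z0 - x‖^2 : ℝ) : EReal) := by push_cast; ring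
  rw [hRHS] at hineq
  have hnetop : f p ≠ ⊤ := by
    intro htop
    rw [htop, EReal.coe_mul_top_of_pos hα, EReal.top_add_of_ne_bot (EReal.coe_ne_bot _)]
      at hineq
    exact (EReal.coe_lt_top _).not_ge hineq
  exact ⟨(f p).toReal, (EReal.coe_toReal hnetop (hne p)).symm⟩

/-- Fixed points of the Davis–Yin operator recover minimizers: with `h` smooth convex with
`L`-Lipschitz gradient, `f, g` proper closed convex (extended-real-valued), step size
`α ∈ (0, 2/L)`, and Davis–Yin updates `ξ = prox_{αf}(ζ)`,
`ψ = prox_{αg}(2ξ - ζ - α∇h(ξ))`, `T(ζ) = ζ + ψ - ξ`, if the sum `f + g + h` has a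
minimizer, then for any fixed point `ζ*` of `T`, the point `ξ* = prox_{αf}(ζ*)`
minimizes `f + g + h`. -/
theorem davis_yin_fixedPoint_minimizer
    (n : ℕ) (f g : EuclideanSpace ℝ (Fin n) → EReal)
    (h : EuclideanSpace ℝ (Fin n) → ℝ)
    (h' : EuclideanSpace ℝ (Fin n) → EuclideanSpace ℝ (Fin n))
    (L : NNReal) (hLpos : 0 < L)
    (hf_conv : ERealConvex f) (hf_lsc : LowerSemicontinuous f)
    (hf_ne_bot : ∀ x, f x ≠ ⊥) (hf_proper : ∃ x, f x ≠ ⊤)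
    (hg_conv : ERealConvex g) (hg_lsc : LowerSemicontinuous g)
    (hg_ne_bot : ∀ x, g x ≠ ⊥) (hg_proper : ∃ x, g x ≠ ⊤)
    (hh_conv : ConvexOn ℝ univ h)
    (hh_diff : ∀ x, HasGradientAt h (h' x) x)
    (hh_lip : LipschitzWith L h')
    (α : ℝ) (hα : α ∈ Ioo (0 : ℝ) (2 / L))
    (proxf proxg : EuclideanSpace ℝ (Fin n) → EuclideanSpace ℝ (Fin n))
    (hproxf : ∀ x, IsProximalPt (fun z => ((α : ℝ) : EReal) * f z) x (proxf x))
    (hproxg : ∀ x, IsProximalPt (fun z => ((α : ℝ) : EReal) * g z) x (proxg x))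
    (hmin : ∃ ξstar, ∀ z, f ξstar + g ξstar + ((h ξstar : ℝ) : EReal) ≤
        f z + g z + ((h z : ℝ) : EReal))
    (ζstar : EuclideanSpace ℝ (Fin n))
    (hfix : ζstar + proxg (2 • proxf ζstar - ζstar - α • h' (proxf ζstar)) - proxf ζstar
        = ζstar) :
    ∀ z, f (proxf ζstar) + g (proxf ζstar) + ((h (proxf ζstar) : ℝ) : EReal) ≤
      f z + g z + ((h z : ℝ) : EReal) := by
  obtain ⟨hα0, hα2⟩ := hα
  set ξ := proxf ζstar with hξ
  set y := 2 • proxf ζstar - ζstar - α • h' (proxf ζstar) with hy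
  have hψ : proxg y = ξ := by
    have h1 := hfix
    rw [add_sub_assoc, add_eq_left, sub_eq_zero] at h1
    exact h1
  obtain ⟨af, haf⟩ := prox_finite f hf_ne_bot hf_proper α hα0 ζstar ξ (hproxf ζstar)
  obtain ⟨ag, hag⟩ : ∃ c : ℝ, g ξ = (c : EReal) := by
    obtain ⟨c, hc⟩ := prox_finite g hg_ne_bot hg_proper α hα0 y (proxg y) (hproxg y)
    exact ⟨c, by rwa [hψ] at hc⟩
  intro z
  by_cases hfz : f z = ⊤
  · rw [hfz, EReal.top_add_of_ne_bot (hg_ne_bot z),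
      EReal.top_add_of_ne_bot (EReal.coe_ne_bot _)]
    exact le_top
  by_cases hgz : g z = ⊤
  · rw [hgz]
    have : (⊤ : EReal) + ((h z : ℝ) : EReal) = ⊤ :=
      EReal.top_add_of_ne_bot (EReal.coe_ne_bot _)
    rw [EReal.add_top_of_ne_bot (hf_ne_bot z), EReal.top_add_of_ne_bot (EReal.coe_ne_bot _)]
    exact le_top
  obtain ⟨bf, hbf⟩ : ∃ c : ℝ, f z = (c : EReal) :=
    ⟨(f z).toReal, (EReal.coe_toReal hfz (hf_ne_bot z)).symm⟩
  obtain ⟨bg, hbg⟩ : ∃ c : ℝ, g z = (c : EReal) :=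
    ⟨(g z).toReal, (EReal.coe_toReal hgz (hg_ne_bot z)).symm⟩
  have I1 : α * af + ⟪ζstar - ξ, z - ξ⟫ ≤ α * bf :=
    prox_subgrad f hf_conv hf_ne_bot α hα0 ζstar ξ (hproxf ζstar) z af bf haf hbf
  have I2 : α * ag + ⟪y - ξ, z - ξ⟫ ≤ α * bg := by
    have := prox_subgrad g hg_conv hg_ne_bot α hα0 y (proxg y) (hproxg y) z ag bg
      (by rwa [hψ]) hbg
    rwa [hψ] at this
  have I3 : ⟪h' ξ, z - ξ⟫ ≤ h z - h ξ := by
    have := grad_convex_ineq h hh_conv ξ (z - ξ) (h' ξ) (hh_diff ξ)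
    simpa using this
  have hsum : ζstar - ξ + (y - ξ) = -(α • h' ξ) := by
    rw [hy, ← hξ, two_nsmul]; abel
  have hinner : ⟪ζstar - ξ, z - ξ⟫ + ⟪y - ξ, z - ξ⟫ = -(α * ⟪h' ξ, z - ξ⟫) := by
    rw [← inner_add_left, hsum, inner_neg_left, real_inner_smul_left]
  have hfinal : af + ag + h ξ ≤ bf + bg + h z := by nlinarith [I1, I2, I3, hinner, hα0]
  rw [haf, hag, hbf, hbg]
  have : ((af : ℝ) : EReal) + (ag : ℝ) + ((h ξ : ℝ) : EReal) =
      ((af + ag + h ξ : ℝ) : EReal) := by push_cast; ring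
  rw [this]
  have : ((bf : ℝ) : EReal) + (bg : ℝ) + ((h z : ℝ) : EReal) =
      ((bf + bg + h z : ℝ) : EReal) := by push_cast; ring
  rw [this]
  exact_mod_cast hfinal
end
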